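/- Under the Horvitz–Thompson setup with π the unordered lifting distribution started from the random-walk stationary distribution, the independent-sample variance satisfies V ≤ N_m · 2|E| · D, where N_m is the number of k-CISs isomorphic to H_m and D = prod_{r=2}^{k−1}(Δ_1+...+Δ_r). -/

import Mathlib

open Finset

attribute [local instance] Classical.propDecidable

variable {V : Type*} [Fintype V] [DecidableEq V]

/-- The number of boundary edges of `S`: edges of `G` joining a vertex of `S` to a vertex
outside of `S`. -/
def boundaryEdgeCount (G : SimpleGraph V) [DecidableRel G.Adj] (S : Finset V) : ℕ :=
  ∑ u ∈ S, (Finset.univ.filter (fun w => w ∉ S ∧ G.Adj u w)).card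

/-- `liftProb G π₁ k T` is the probability that the lifting procedure started from
`v₁ ~ π₁`, which at each step adds the outside endpoint of an edge chosen uniformly from
the boundary of the current subgraph, produces the vertex set `T` after `k - 1` steps. -/
noncomputable def liftProb (G : SimpleGraph V) [DecidableRel G.Adj] (π₁ : V → ℝ) :
    ℕ → Finset V → ℝ
  | 0, _ => 0
  | 1, T => ∑ v ∈ T, if T = {v} then π₁ v else 0
  | (n + 2), T => ∑ v ∈ T,
      if (G.induce ((T.erase v : Finset V) : Set V)).Connected then
        liftProb G π₁ (n + 1) (T.erase v)
          * ((((T.erase v).filter (fun w => G.Adj w v)).card : ℝ)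
            / (boundaryEdgeCount G (T.erase v) : ℝ))
      else 0

/-- `Δ₁ + ⋯ + Δᵣ`: the largest possible sum of the degrees of `r` distinct vertices,
i.e. the sum of the `r` largest vertex degrees of `G`. -/
def topDegSum (G : SimpleGraph V) [DecidableRel G.Adj] (r : ℕ) : ℕ :=
  (Finset.univ.powersetCard r).sup (fun s => ∑ v ∈ s, G.degree v)

lemma liftProb_nonneg (G : SimpleGraph V) [DecidableRel G.Adj] (π₁ : V → ℝ)
    (hπ : ∀ v, 0 ≤ π₁ v) : ∀ (n : ℕ) (S : Finset V), 0 ≤ liftProb G π₁ n S := by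
  intro n
  induction n using Nat.strong_induction_on with
  | _ n ih =>
    match n with
    | 0 => intro S; simp [liftProb]
    | 1 =>
      intro S
      rw [liftProb]
      refine Finset.sum_nonneg fun v _ => ?_
      split <;> [exact hπ v; rfl]
    | (m + 2) =>
      intro S
      rw [liftProb]
      refine Finset.sum_nonneg fun v _ => ?_
      split
      · exact mul_nonneg (ih (m + 1) (by omega) _) (by positivity)
      · rfl

lemma exists_adj_of_connected {W : Type*} [Fintype W] {H : SimpleGraph W}
    (hc : H.Connected) (h2 : 1 < Fintype.card W) (v : W) : ∃ w, H.Adj v w := by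
  obtain ⟨w, hw⟩ := Fintype.exists_ne_of_one_lt_card h2 v
  obtain ⟨p⟩ := hc v w
  cases p with
  | nil => exact absurd rfl hw.symm
  | cons h q => exact ⟨_, h⟩

lemma exists_avoid_vertex {W : Type*} [Fintype W] {H : SimpleGraph W}
    (hc : H.Connected) (h2 : 1 < Fintype.card W) :
    ∃ v : W, ∀ a b : W, a ≠ v → b ≠ v → ∃ p : H.Walk a b, v ∉ p.support := by
  classical
  obtain ⟨u⟩ := hc.nonempty
  have : Nonempty W := ⟨u⟩
  obtain ⟨v, hv⟩ := Finite.exists_max (fun w => H.dist u w)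
  have key : ∀ w, w ≠ v → ∃ p : H.Walk u w, v ∉ p.support := by
    intro w hw
    by_cases hvu : v = u
    · -- then all distances are 0, so all vertices equal u
      exfalso
      obtain ⟨x, hx⟩ := Fintype.exists_ne_of_one_lt_card h2 u
      have h0 : 0 < H.dist u x := hc.pos_dist_of_ne (Ne.symm hx)
      have := hv x
      rw [hvu, SimpleGraph.dist_self] at this
      omega
    · obtain ⟨p, hp⟩ := (hc u w).exists_walk_length_eq_dist
      refine ⟨p, fun hvp => ?_⟩
      have h1 : H.dist u v ≤ (p.takeUntil v hvp).length := H.dist_le _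
      have h2' : 1 ≤ (p.dropUntil v hvp).length := by
        rcases Nat.eq_zero_or_pos (p.dropUntil v hvp).length with h0 | h0
        · exact absurd (SimpleGraph.Walk.eq_of_length_eq_zero h0) hw.symm
        · omega
      have h3 : (p.takeUntil v hvp).length + (p.dropUntil v hvp).length = p.length := by
        have h := congrArg SimpleGraph.Walk.length (p.take_spec hvp)
        rwa [SimpleGraph.Walk.length_append] at h
      have h4 := hv w
      omega
  obtain ⟨v₀, hv₀⟩ : ∃ v₀ : W, True := ⟨u, trivial⟩
  refine ⟨v, fun a b ha hb => ?_⟩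
  obtain ⟨p, hp⟩ := key a ha
  obtain ⟨q, hq⟩ := key b hb
  refine ⟨p.reverse.append q, ?_⟩
  rw [SimpleGraph.Walk.mem_support_append_iff, SimpleGraph.Walk.support_reverse]
  simp only [List.mem_reverse]
  tauto

lemma induce_reachable_of_walk {G : SimpleGraph V} {s : Set V} :
    ∀ {u v : V} (p : G.Walk u v) (hu : u ∈ s) (hv : v ∈ s),
      (∀ x ∈ p.support, x ∈ s) → (G.induce s).Reachable ⟨u, hu⟩ ⟨v, hv⟩ := by
  intro u v p
  induction p with
  | nil => intro hu hv _; rfl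
  | @cons u x v h q ih =>
    intro hu hv hp
    have hx : x ∈ s := hp x (by simp)
    have hadj : (G.induce s).Adj ⟨u, hu⟩ ⟨x, hx⟩ := h
    exact hadj.reachable.trans (ih hx hv fun y hy => hp y (by simp [hy]))

lemma exists_noncut (G : SimpleGraph V) [DecidableRel G.Adj] (S : Finset V)
    (h2 : 2 ≤ S.card) (hconn : (G.induce (S : Set V)).Connected) :
    ∃ v ∈ S, (G.induce ((S.erase v : Finset V) : Set V)).Connected ∧
      1 ≤ ((S.erase v).filter (fun w => G.Adj w v)).card := by
  classical
  have hcard : 1 < Fintype.card ((S : Set V) : Type _) := by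
    have e : ((S : Set V) : Type _) ≃ {x // x ∈ S} :=
      Equiv.subtypeEquivRight (fun x => Finset.mem_coe)
    rw [Fintype.card_congr e, Fintype.card_coe]
    omega
  obtain ⟨vb, hvb⟩ := exists_avoid_vertex hconn hcard
  have hvS : (vb : V) ∈ S := vb.2
  refine ⟨vb, hvS, ?_, ?_⟩
  · rw [SimpleGraph.connected_iff]
    constructor
    · rintro ⟨a, ha⟩ ⟨b, hb⟩
      have ha' : a ∈ S.erase (vb : V) := ha
      have hb' : b ∈ S.erase (vb : V) := hb
      have haS : a ∈ S := Finset.mem_of_mem_erase ha'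
      have hbS : b ∈ S := Finset.mem_of_mem_erase hb'
      have hav : a ≠ (vb : V) := Finset.ne_of_mem_erase ha'
      have hbv : b ≠ (vb : V) := Finset.ne_of_mem_erase hb'
      obtain ⟨p, hp⟩ := hvb ⟨a, haS⟩ ⟨b, hbS⟩
        (fun h => hav (congrArg Subtype.val h)) (fun h => hbv (congrArg Subtype.val h))
      let homf : G.induce ((S : Set V)) →g G := ⟨Subtype.val, fun h => h⟩
      have hsupp : ∀ x ∈ (p.map homf).support, x ∈ ((S.erase (vb : V) : Finset V) : Set V) := by
        intro x hx
        rw [SimpleGraph.Walk.support_map, List.mem_map] at hx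
        obtain ⟨y, hy, rfl⟩ := hx
        have hyv : y ≠ vb := fun h => hp (h ▸ hy)
        have : (y : V) ≠ (vb : V) := fun h => hyv (Subtype.ext h)
        exact Finset.mem_coe.mpr (Finset.mem_erase.mpr ⟨this, y.2⟩)
      exact induce_reachable_of_walk (p.map homf) ha hb hsupp
    · have h1 : 1 ≤ (S.erase (vb : V)).card := by
        rw [Finset.card_erase_of_mem hvS]; omega
      obtain ⟨u, hu⟩ := Finset.card_pos.mp (show 0 < (S.erase (vb : V)).card by omega)
      exact ⟨⟨u, Finset.mem_coe.mpr hu⟩⟩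
  · obtain ⟨wb, hw⟩ := exists_adj_of_connected hconn hcard vb
    have hadj : G.Adj (vb : V) (wb : V) := hw
    have hne : (wb : V) ≠ (vb : V) := fun h => hw.ne' (Subtype.ext h)
    exact Finset.card_pos.mpr
      ⟨wb, Finset.mem_filter.mpr ⟨Finset.mem_erase.mpr ⟨hne, wb.2⟩, hadj.symm⟩⟩

lemma one_le_boundary (G : SimpleGraph V) [DecidableRel G.Adj] {S' : Finset V} {v : V}
    (hv : v ∉ S') (hc : 1 ≤ (S'.filter (fun w => G.Adj w v)).card) :
    1 ≤ boundaryEdgeCount G S' := by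
  obtain ⟨w, hw⟩ := Finset.card_pos.mp hc
  rw [Finset.mem_filter] at hw
  have h1 : 1 ≤ (Finset.univ.filter (fun x => x ∉ S' ∧ G.Adj w x)).card :=
    Finset.card_pos.mpr ⟨v, Finset.mem_filter.mpr ⟨Finset.mem_univ v, hv, hw.2⟩⟩
  calc 1 ≤ (Finset.univ.filter (fun x => x ∉ S' ∧ G.Adj w x)).card := h1
    _ ≤ boundaryEdgeCount G S' :=
      Finset.single_le_sum
        (f := fun u => (Finset.univ.filter (fun x => x ∉ S' ∧ G.Adj u x)).card)
        (fun u _ => Nat.zero_le _) hw.1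

lemma boundary_le_topDegSum (G : SimpleGraph V) [DecidableRel G.Adj] (S' : Finset V) :
    boundaryEdgeCount G S' ≤ topDegSum G S'.card := by
  have h1 : boundaryEdgeCount G S' ≤ ∑ u ∈ S', G.degree u := by
    refine Finset.sum_le_sum fun u _ => ?_
    rw [SimpleGraph.degree, SimpleGraph.neighborFinset_eq_filter]
    exact Finset.card_le_card (by intro x hx; simp_all)
  rw [topDegSum]
  exact h1.trans (Finset.le_sup (f := fun s => ∑ v ∈ s, G.degree v)
    (Finset.mem_powersetCard_univ.mpr rfl))

lemma boundary_singleton (G : SimpleGraph V) [DecidableRel G.Adj] (u : V) :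
    boundaryEdgeCount G {u} = G.degree u := by
  rw [boundaryEdgeCount, Finset.sum_singleton, SimpleGraph.degree,
    SimpleGraph.neighborFinset_eq_filter]
  congr 1
  ext x
  simp only [Finset.mem_filter, Finset.mem_univ, true_and, Finset.mem_singleton]
  constructor
  · tauto
  · intro hx
    exact ⟨fun h => G.irrefl (h ▸ hx), hx⟩

set_option maxHeartbeats 2000000 in
lemma liftProb_lb (G : SimpleGraph V) [DecidableRel G.Adj] (hG : G.Connected) [Nontrivial V] :
    ∀ (n : ℕ) (S : Finset V), S.card = n → 1 ≤ n → (G.induce (S : Set V)).Connected →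
      1 ≤ liftProb G (fun v => (G.degree v : ℝ) / (2 * G.edgeFinset.card)) n S
          * (2 * G.edgeFinset.card) * ∏ r ∈ Finset.Icc 2 (n - 1), (topDegSum G r : ℝ) := by
  have hVcard : 1 < Fintype.card V := Fintype.one_lt_card
  have hdeg : ∀ v : V, 1 ≤ G.degree v := by
    intro v
    obtain ⟨w, hw⟩ := exists_adj_of_connected hG hVcard v
    exact G.degree_pos_iff_exists_adj v |>.mpr ⟨w, hw⟩
  have hE : 0 < G.edgeFinset.card := by
    obtain ⟨v⟩ := hG.nonempty
    obtain ⟨w, hw⟩ := exists_adj_of_connected hG hVcard v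
    exact Finset.card_pos.mpr ⟨s(v, w), SimpleGraph.mem_edgeFinset.mpr hw⟩
  have hE' : (0 : ℝ) < 2 * G.edgeFinset.card := by
    have : (0 : ℝ) < (G.edgeFinset.card : ℝ) := by exact_mod_cast hE
    linarith
  set π₁ : V → ℝ := fun v => (G.degree v : ℝ) / (2 * G.edgeFinset.card) with hπ₁
  have hπpos : ∀ v, 0 ≤ π₁ v := fun v => by positivity
  intro n
  induction n with
  | zero => intro S _ h1 _; omega
  | succ n ih =>
    intro S hcard h1 hconn
    rcases Nat.eq_zero_or_pos n with rfl | hn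
    · obtain ⟨v, rfl⟩ := Finset.card_eq_one.mp hcard
      have hl : liftProb G π₁ 1 {v} = π₁ v := by simp [liftProb]
      rw [hl]
      simp only [Nat.add_sub_cancel]
      rw [show Finset.Icc 2 0 = (∅ : Finset ℕ) from rfl, Finset.prod_empty, mul_one,
        hπ₁, div_mul_cancel₀ _ hE'.ne']
      exact_mod_cast hdeg v
    · obtain ⟨m, rfl⟩ : ∃ m, n = m + 1 := ⟨n - 1, by omega⟩
      obtain ⟨v, hvS, hconn', hcfilter⟩ := exists_noncut G S (by omega) hconn
      set S' := S.erase v with hS'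
      have hvS' : v ∉ S' := Finset.notMem_erase v S
      have hcard' : S'.card = m + 1 := by
        rw [hS', Finset.card_erase_of_mem hvS]; omega
      set c : ℝ := ((S'.filter (fun w => G.Adj w v)).card : ℝ) with hc
      set b : ℝ := (boundaryEdgeCount G S' : ℝ) with hb
      have hc1 : (1 : ℝ) ≤ c := by rw [hc]; exact_mod_cast hcfilter
      have hb1 : (1 : ℝ) ≤ b := by
        rw [hb]; exact_mod_cast one_le_boundary G hvS' hcfilter
      have hb0 : (0 : ℝ) < b := by linarith
      have hL'0 : 0 ≤ liftProb G π₁ (m + 1) S' := liftProb_nonneg G π₁ hπpos _ _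
      have hterm : liftProb G π₁ (m + 1) S' * (c / b) ≤ liftProb G π₁ (m + 1 + 1) S := by
        rw [show m + 1 + 1 = m + 2 from rfl, liftProb]
        refine le_trans ?_ (Finset.single_le_sum
          (f := fun w => if (G.induce ((S.erase w : Finset V) : Set V)).Connected then
            liftProb G π₁ (m + 1) (S.erase w)
              * ((((S.erase w).filter (fun x => G.Adj x w)).card : ℝ)
                / (boundaryEdgeCount G (S.erase w) : ℝ))
            else 0)
          (fun u _ => ?_) hvS)
        · rw [← hS', if_pos hconn']
        · split
          · exact mul_nonneg (liftProb_nonneg G π₁ hπpos _ _) (by positivity)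
          · exact le_refl 0
      rcases Nat.eq_zero_or_pos m with rfl | hm
      · -- S' is a singleton {u}
        obtain ⟨u, hu⟩ := Finset.card_eq_one.mp hcard'
        have hlu : liftProb G π₁ 1 S' = π₁ u := by rw [hu]; simp [liftProb]
        have hbu : b = (G.degree u : ℝ) := by rw [hb, hu, boundary_singleton]
        have hdu : (1 : ℝ) ≤ (G.degree u : ℝ) := by exact_mod_cast hdeg u
        have hcle : c ≤ 1 := by
          rw [hc]
          have : (S'.filter (fun w => G.Adj w v)).card ≤ S'.card :=
            Finset.card_le_card (Finset.filter_subset _ _)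
          rw [hcard'] at this
          exact_mod_cast this
        have hceq : c = 1 := le_antisymm hcle hc1
        simp only [Nat.add_sub_cancel]
        rw [show Finset.Icc 2 1 = (∅ : Finset ℕ) from rfl, Finset.prod_empty, mul_one]
        have hkey : liftProb G π₁ 1 S' * (c / b) * (2 * G.edgeFinset.card) = 1 := by
          have hdpos : (0 : ℝ) < (G.degree u : ℝ) := by linarith
          have hpu : π₁ u = (G.degree u : ℝ) / (2 * G.edgeFinset.card) := rfl
          have hdne : (G.degree u : ℝ) ≠ 0 := ne_of_gt hdpos
          have hEne : (2 * ((G.edgeFinset.card : ℝ))) ≠ 0 := ne_of_gt hE'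
          have arith : ∀ d e : ℝ, d ≠ 0 → e ≠ 0 → d / e * (1 / d) * e = 1 := by
            intro d e hd he; field_simp
          rw [hlu, hbu, hceq, hpu]
          exact arith _ _ hdne hEne
        calc (1 : ℝ) = liftProb G π₁ 1 S' * (c / b) * (2 * G.edgeFinset.card) := hkey.symm
          _ ≤ liftProb G π₁ (0 + 1 + 1) S * (2 * G.edgeFinset.card) :=
            mul_le_mul_of_nonneg_right hterm hE'.le
      · -- m ≥ 1
        have ihS' := ih S' hcard' (by omega) hconn'
        set D : ℝ := (topDegSum G (m + 1) : ℝ) with hD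
        have hbD : b ≤ D := by
          rw [hb, hD, ← hcard']
          exact_mod_cast boundary_le_topDegSum G S'
        set P : ℝ := ∏ r ∈ Finset.Icc 2 m, (topDegSum G r : ℝ) with hP
        have hP0 : 0 ≤ P := Finset.prod_nonneg fun r _ => by positivity
        have hsplit : ∏ r ∈ Finset.Icc 2 (m + 1 + 1 - 1), (topDegSum G r : ℝ) = P * D := by
          rw [show m + 1 + 1 - 1 = m + 1 from rfl,
            Finset.prod_Icc_succ_top (by omega : 2 ≤ m + 1), hP, hD]
        have hD0 : (0 : ℝ) ≤ D := by rw [hD]; positivity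
        have hkey : (1 : ℝ) ≤ (c / b) * D := by
          rw [div_mul_eq_mul_div, le_div_iff₀ hb0, one_mul]
          nlinarith [hbD, hc1, hD0]
        have hprev : ∏ r ∈ Finset.Icc 2 (m + 1 - 1), (topDegSum G r : ℝ) = P := by
          rw [show m + 1 - 1 = m from rfl, hP]
        rw [hprev] at ihS'
        rw [hsplit, mul_assoc]
        have hnn : 0 ≤ (2 * ((G.edgeFinset.card : ℝ))) * (P * D) := mul_nonneg hE'.le (mul_nonneg hP0 hD0)
        refine le_trans ?_ (mul_le_mul_of_nonneg_right hterm hnn)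
        have heq : liftProb G π₁ (m + 1) S' * (c / b) * (2 * ((G.edgeFinset.card : ℝ)) * (P * D))
            = (liftProb G π₁ (m + 1) S' * (2 * ((G.edgeFinset.card : ℝ))) * P) * ((c / b) * D) := by
          ring
        rw [heq]
        have hfin := mul_le_mul ihS' hkey zero_le_one (zero_le_one.trans ihS')
        simpa using hfin

/-- Variance bound for the unordered lift estimator started from the random-walk stationary
distribution `π₁(v) = deg(v)/(2|E|)`: with `φ(T) = 1(T ≅ H_m)/π_U(T)` and `T ~ π_U` over
the connected induced `k`-subgraphs, `Var(φ) ≤ N_m · 2|E| · D` where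
`N_m` is the number of `k`-CISs isomorphic to `H_m` and `D = ∏_{r=2}^{k-1}(Δ₁+⋯+Δᵣ)`. -/
theorem stmt_19 (G : SimpleGraph V) [DecidableRel G.Adj] (hG : G.Connected)
    [Nontrivial V] (k : ℕ) (hk : 1 ≤ k) (Hm : SimpleGraph (Fin k)) :
    (∑ T ∈ Finset.univ.filter
          (fun T : Finset V => T.card = k ∧ (G.induce (T : Set V)).Connected),
        liftProb G (fun v => (G.degree v : ℝ) / (2 * G.edgeFinset.card)) k T
          * ((if Nonempty ((G.induce (T : Set V)) ≃g Hm) then (1 : ℝ) else 0)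
              / liftProb G (fun v => (G.degree v : ℝ) / (2 * G.edgeFinset.card)) k T) ^ 2)
      - (∑ T ∈ Finset.univ.filter
            (fun T : Finset V => T.card = k ∧ (G.induce (T : Set V)).Connected),
          liftProb G (fun v => (G.degree v : ℝ) / (2 * G.edgeFinset.card)) k T
            * ((if Nonempty ((G.induce (T : Set V)) ≃g Hm) then (1 : ℝ) else 0)
                / liftProb G (fun v => (G.degree v : ℝ) / (2 * G.edgeFinset.card)) k T)) ^ 2
      ≤ ((Finset.univ.filter
            (fun T : Finset V => T.card = k ∧ (G.induce (T : Set V)).Connected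
              ∧ Nonempty ((G.induce (T : Set V)) ≃g Hm))).card : ℝ)
          * (2 * G.edgeFinset.card)
          * ∏ r ∈ Finset.Icc 2 (k - 1), (topDegSum G r : ℝ) := by
  classical
  set π₁ : V → ℝ := fun v => (G.degree v : ℝ) / (2 * G.edgeFinset.card) with hπ₁
  set B : ℝ := (2 * (G.edgeFinset.card : ℝ)) * ∏ r ∈ Finset.Icc 2 (k - 1), (topDegSum G r : ℝ)
    with hB
  set A : Finset (Finset V) := Finset.univ.filter
    (fun T : Finset V => T.card = k ∧ (G.induce (T : Set V)).Connected) with hA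
  have hstep1 : ∀ T ∈ A,
      liftProb G π₁ k T
        * ((if Nonempty ((G.induce (T : Set V)) ≃g Hm) then (1 : ℝ) else 0)
            / liftProb G π₁ k T) ^ 2
      ≤ if Nonempty ((G.induce (T : Set V)) ≃g Hm) then B else 0 := by
    intro T hT
    rw [hA, Finset.mem_filter] at hT
    by_cases hiso : Nonempty ((G.induce (T : Set V)) ≃g Hm)
    · rw [if_pos hiso, if_pos hiso]
      have hlb := liftProb_lb G hG k T hT.2.1 hk hT.2.2
      have hfnn : 0 ≤ liftProb G π₁ k T :=
        liftProb_nonneg G π₁ (fun v => by rw [hπ₁]; positivity) k T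
      have hf0 : 0 < liftProb G π₁ k T := by
        rcases hfnn.lt_or_eq with h | h
        · exact h
        · exfalso; rw [← h] at hlb; simp at hlb; linarith
      have hfB : 1 ≤ liftProb G π₁ k T * B := by
        rw [hB, ← mul_assoc]; exact hlb
      have heq : liftProb G π₁ k T * ((1 : ℝ) / liftProb G π₁ k T) ^ 2
          = 1 / liftProb G π₁ k T := by
        field_simp
      rw [heq, div_le_iff₀ hf0, mul_comm]
      exact hfB
    · rw [if_neg hiso, if_neg hiso]
      simp
  have hstep2 : (∑ T ∈ A, liftProb G π₁ k T
        * ((if Nonempty ((G.induce (T : Set V)) ≃g Hm) then (1 : ℝ) else 0)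
            / liftProb G π₁ k T) ^ 2)
      ≤ ∑ T ∈ A, if Nonempty ((G.induce (T : Set V)) ≃g Hm) then B else 0 :=
    Finset.sum_le_sum hstep1
  have hstep3 : (∑ T ∈ A, if Nonempty ((G.induce (T : Set V)) ≃g Hm) then B else 0)
      = ((Finset.univ.filter
            (fun T : Finset V => T.card = k ∧ (G.induce (T : Set V)).Connected
              ∧ Nonempty ((G.induce (T : Set V)) ≃g Hm))).card : ℝ) * B := by
    rw [← Finset.sum_filter, Finset.sum_const, nsmul_eq_mul, hA, Finset.filter_filter]
    congr 2
    congr 1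
    ext T
    simp [and_assoc]
  refine le_trans (sub_le_self _ (sq_nonneg _)) ?_
  calc (∑ T ∈ A, liftProb G π₁ k T
        * ((if Nonempty ((G.induce (T : Set V)) ≃g Hm) then (1 : ℝ) else 0)
            / liftProb G π₁ k T) ^ 2)
      ≤ ((Finset.univ.filter
            (fun T : Finset V => T.card = k ∧ (G.induce (T : Set V)).Connected
              ∧ Nonempty ((G.induce (T : Set V)) ≃g Hm))).card : ℝ) * B :=
        hstep2.trans (le_of_eq hstep3)
    _ = _ := by rw [hB, ← mul_assoc]
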